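/- For all nonnegative integers b, k and all m, the inversion identity p_k^{(b)}(m) = ∑_{j=0}^{k} (-1)^j * binom(2b+j, j) * q_{k-j}^{(b)}(m) holds, where p_j^{(b)}(m) = binom(m-b-1, j) * binom(m+b+j, j) and q_j^{(b)}(m) = binom(m+b, j) * binom(m-b-1+j, j). -/

import Mathlib

/-- Binomial coefficient with arbitrary (rational) upper argument:
`binom(x,k) = x(x-1)...(x-k+1)/k!`. -/
noncomputable def qbinom (x : ℚ) (k : ℕ) : ℚ :=
  (∏ i ∈ Finset.range k, (x - i)) / (Nat.factorial k)

open Finset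

lemma descPochhammer_smeval_prod (x : ℚ) (k : ℕ) :
    (descPochhammer ℤ k).smeval x = ∏ i ∈ range k, (x - i) := by
  induction k with
  | zero => simp [descPochhammer_zero, Polynomial.smeval_one]
  | succ n ih =>
      rw [descPochhammer_succ_right, Polynomial.smeval_mul, ih, prod_range_succ]
      congr 1
      simp [Polynomial.smeval_sub, Polynomial.smeval_X, Polynomial.smeval_natCast]

lemma qbinom_eq_choose (x : ℚ) (k : ℕ) : qbinom x k = Ring.choose x k := by
  have h := Ring.descPochhammer_eq_factorial_smul_choose x k
  rw [descPochhammer_smeval_prod, nsmul_eq_mul] at h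
  rw [qbinom, h]
  field_simp

lemma qbinom_vandermonde (x y : ℚ) (n : ℕ) :
    qbinom (x + y) n = ∑ i ∈ range (n + 1), qbinom x i * qbinom y (n - i) := by
  rw [qbinom_eq_choose, Ring.add_choose_eq n (Commute.all x y),
    Finset.Nat.sum_antidiagonal_eq_sum_range_succ_mk]
  simp [qbinom_eq_choose]

lemma qbinom_natCast (n k : ℕ) : qbinom (n : ℚ) k = n.choose k := by
  rw [qbinom_eq_choose, Ring.choose_natCast]

lemma qbinom_zero (k : ℕ) : qbinom 0 k = if k = 0 then 1 else 0 := by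
  rw [qbinom_eq_choose, Ring.choose_zero_ite]

lemma qbinom_mul_qbinom (c : ℚ) (j i : ℕ) :
    qbinom c j * qbinom (c - j) i = ((j + i).choose j : ℚ) * qbinom c (j + i) := by
  have h := Ring.choose_smul_choose c (n := j + i) (k := j) (Nat.le_add_right j i)
  rw [Nat.add_sub_cancel_left] at h
  rw [qbinom_eq_choose, qbinom_eq_choose, ← h, nsmul_eq_mul, qbinom_eq_choose]

lemma qbinom_neg (x : ℚ) (j : ℕ) :
    qbinom (-x) j = (-1) ^ j * qbinom (x + j - 1) j := by
  unfold qbinom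
  have h1 : ∏ i ∈ range j, (-x - i) = (-1) ^ j * ∏ i ∈ range j, (x + i) := by
    calc ∏ i ∈ range j, (-x - (i : ℚ)) = ∏ i ∈ range j, (-1) * (x + i) :=
          prod_congr rfl fun i _ => by ring
      _ = (-1) ^ j * ∏ i ∈ range j, (x + (i : ℚ)) := by
          rw [prod_mul_distrib, prod_const, card_range]
  have h2 : ∏ i ∈ range j, (x + (j : ℚ) - 1 - i) = ∏ i ∈ range j, (x + i) := by
    rw [← prod_range_reflect (fun i => x + (i : ℚ)) j]
    refine prod_congr rfl fun i hi => ?_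
    rw [mem_range] at hi
    have : ((j - 1 - i : ℕ) : ℚ) = (j : ℚ) - 1 - i := by
      have : j - 1 - i = j - (1 + i) := by omega
      rw [this, Nat.cast_sub (by omega)]
      push_cast; ring
    rw [this]; ring
  rw [h1, h2, mul_div_assoc]

lemma qbinom_L (x : ℚ) {s k : ℕ} (hs : s ≤ k) :
    qbinom (x + s) k * qbinom (x + k) (k - s) = qbinom (x + k) k * qbinom x (k - s) := by
  unfold qbinom
  rw [div_mul_div_comm, div_mul_div_comm]
  congr 1
  have key : ∀ a b : ℕ, ∏ t ∈ range (a + b), (x + (k : ℚ) - t) =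
      (∏ t ∈ range a, (x + (k : ℚ) - t)) * ∏ t ∈ range b, (x + (k : ℚ) - (a + t)) := by
    intro a b
    rw [prod_range_add]
    simp
  have h1 : ∏ i ∈ range k, (x + (s : ℚ) - i) =
      ∏ t ∈ range k, (x + (k : ℚ) - ((k - s) + t : ℕ)) := by
    refine prod_congr rfl fun i _ => ?_
    rw [Nat.cast_add, Nat.cast_sub hs]
    ring
  have h2 : ∏ i ∈ range (k - s), (x - i) =
      ∏ t ∈ range (k - s), (x + (k : ℚ) - (k + t : ℕ)) := by
    refine prod_congr rfl fun i _ => ?_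
    push_cast; ring
  calc (∏ i ∈ range k, (x + (s : ℚ) - i)) * ∏ i ∈ range (k - s), (x + (k : ℚ) - i)
      = (∏ t ∈ range (k - s), (x + (k : ℚ) - t)) *
        ∏ t ∈ range k, (x + (k : ℚ) - ((k - s) + t : ℕ)) := by
        rw [h1, mul_comm]
    _ = ∏ t ∈ range ((k - s) + k), (x + (k : ℚ) - t) := by
        rw [prod_range_add]
    _ = ∏ t ∈ range (k + (k - s)), (x + (k : ℚ) - t) := by rw [Nat.add_comm]
    _ = (∏ i ∈ range k, (x + (k : ℚ) - i)) * ∏ i ∈ range (k - s), (x - i) := by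
        rw [prod_range_add, h2]

lemma sum_triangle (k : ℕ) (f : ℕ → ℕ → ℚ) :
    ∑ j ∈ range (k + 1), ∑ i ∈ range (k + 1 - j), f j i =
      ∑ s ∈ range (k + 1), ∑ j ∈ range (s + 1), f j (s - j) := by
  rw [Finset.sum_sigma', Finset.sum_sigma']
  refine sum_nbij' (fun p => ⟨p.1 + p.2, p.1⟩) (fun p => ⟨p.2, p.1 - p.2⟩) ?_ ?_ ?_ ?_ ?_
  · rintro ⟨a, b⟩ h
    simp only [mem_sigma, mem_range] at h ⊢
    omega
  · rintro ⟨a, b⟩ h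
    simp only [mem_sigma, mem_range] at h ⊢
    omega
  · rintro ⟨a, b⟩ h
    simp only [mem_sigma, mem_range] at h
    have hb : a + b - a = b := by omega
    simp only [hb]
  · rintro ⟨a, b⟩ h
    simp only [mem_sigma, mem_range] at h
    have hb : b + (a - b) = a := by omega
    simp only [hb]
  · rintro ⟨a, b⟩ h
    simp only [mem_sigma, mem_range] at h
    have hb : a + b - a = b := by omega
    simp only [hb]

lemma sumB (x : ℚ) {s k : ℕ} (hsk : s ≤ k) :
    ∑ j ∈ range (s + 1), (s.choose j : ℚ) * qbinom x (k - j) = qbinom (x + s) k := by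
  rw [show x + (s : ℚ) = (s : ℚ) + x by ring, qbinom_vandermonde]
  rw [← Finset.sum_subset (Finset.range_subset_range.mpr (by omega) : range (s+1) ⊆ range (k+1))
      (fun t _ ht => ?_)]
  · exact sum_congr rfl fun t _ => by rw [qbinom_natCast]
  · rw [mem_range, not_lt] at ht
    rw [qbinom_natCast, Nat.choose_eq_zero_of_lt (by omega), Nat.cast_zero, zero_mul]

lemma inverse_id (x c : ℚ) (k : ℕ) :
    qbinom (x + c) k * qbinom (x + k) k =
      ∑ j ∈ range (k + 1),
        qbinom c j * (qbinom x (k - j) * qbinom (x + c + ((k - j : ℕ) : ℚ)) (k - j)) := by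
  have hstepA : ∀ j ∈ range (k + 1),
      qbinom c j * (qbinom x (k - j) * qbinom (x + c + ((k - j : ℕ) : ℚ)) (k - j)) =
      ∑ i ∈ range (k + 1 - j),
        ((j + i).choose j : ℚ) * qbinom c (j + i) * qbinom (x + k) (k - j - i) *
          qbinom x (k - j) := by
    intro j hj
    rw [mem_range] at hj
    have hjk : j ≤ k := by omega
    have harg : x + c + ((k - j : ℕ) : ℚ) = (c - j) + (x + k) := by
      rw [Nat.cast_sub hjk]; ring
    have hr : k + 1 - j = k - j + 1 := by omega
    rw [harg, qbinom_vandermonde, hr, mul_comm (qbinom x (k - j)) _, ← mul_assoc, mul_sum,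
      sum_mul]
    refine sum_congr rfl fun i hi => ?_
    rw [← mul_assoc, qbinom_mul_qbinom]
  rw [sum_congr rfl hstepA,
    sum_triangle k (fun j i => ((j + i).choose j : ℚ) * qbinom c (j + i) *
      qbinom (x + k) (k - j - i) * qbinom x (k - j))]
  have hstepC : ∀ s ∈ range (k + 1),
      (∑ j ∈ range (s + 1), ((j + (s - j)).choose j : ℚ) * qbinom c (j + (s - j)) *
        qbinom (x + k) (k - j - (s - j)) * qbinom x (k - j)) =
      qbinom c s * (qbinom (x + k) k * qbinom x (k - s)) := by
    intro s hs
    rw [mem_range] at hs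
    have hsk : s ≤ k := by omega
    have h1 : (∑ j ∈ range (s + 1), ((j + (s - j)).choose j : ℚ) * qbinom c (j + (s - j)) *
        qbinom (x + k) (k - j - (s - j)) * qbinom x (k - j)) =
        (∑ j ∈ range (s + 1), (s.choose j : ℚ) * qbinom x (k - j)) *
          (qbinom c s * qbinom (x + k) (k - s)) := by
      rw [sum_mul]
      refine sum_congr rfl fun j hj => ?_
      rw [mem_range] at hj
      have e1 : j + (s - j) = s := by omega
      have e2 : k - j - (s - j) = k - s := by omega
      rw [e1, e2]; ring
    rw [h1, sumB x hsk, ← mul_assoc, mul_comm (qbinom (x + s) k) (qbinom c s), mul_assoc,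
      qbinom_L x hsk, ← mul_assoc, mul_assoc]
  rw [sum_congr rfl hstepC, show x + c = c + x from add_comm x c,
    qbinom_vandermonde c x k, sum_mul]
  exact sum_congr rfl fun s _ => by ring


/-- `p_j^{(b)}(m) = binom(m-b-1, j) * binom(m+b+j, j)`. -/
noncomputable def pP (b j : ℕ) (m : ℚ) : ℚ :=
  qbinom (m - b - 1) j * qbinom (m + b + j) j

/-- `q_j^{(b)}(m) = binom(m+b, j) * binom(m-b-1+j, j)`. -/
noncomputable def qP (b j : ℕ) (m : ℚ) : ℚ :=
  qbinom (m + b) j * qbinom (m - b - 1 + j) j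

theorem stmt3 (b k : ℕ) (m : ℚ) :
    pP b k m = ∑ j ∈ Finset.range (k + 1),
      (-1 : ℚ) ^ j * (Nat.choose (2 * b + j) j : ℚ) * qP b (k - j) m := by
  set x : ℚ := m - b - 1 with hx
  set c : ℚ := 2 * b + 1 with hc
  have hcoef : ∀ j : ℕ, (-1 : ℚ) ^ j * (Nat.choose (2 * b + j) j : ℚ) = qbinom (-c) j := by
    intro j
    rw [qbinom_neg, show c + (j : ℚ) - 1 = ((2 * b + j : ℕ) : ℚ) by push_cast [hc]; ring,
      qbinom_natCast]
  have hQ : ∀ n : ℕ, qP b n m = qbinom (x + c) n * qbinom (x + n) n := by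
    intro n
    rw [qP, show m + (b : ℚ) = x + c by rw [hx, hc]; ring, hx]
  have hP : ∀ j ∈ range (k + 1),
      (-1 : ℚ) ^ j * (Nat.choose (2 * b + j) j : ℚ) * qP b (k - j) m =
      ∑ i ∈ range (k + 1 - j), qbinom (-c) j * qbinom c i *
        (qbinom x (k - j - i) * qbinom (x + c + ((k - j - i : ℕ) : ℚ)) (k - j - i)) := by
    intro j hj
    rw [mem_range] at hj
    have hr : k + 1 - j = k - j + 1 := by omega
    rw [hcoef, hQ, inverse_id x c (k - j), hr, mul_sum]
    exact sum_congr rfl fun i _ => by ring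
  rw [sum_congr rfl hP,
    sum_triangle k (fun j i => qbinom (-c) j * qbinom c i *
      (qbinom x (k - j - i) * qbinom (x + c + ((k - j - i : ℕ) : ℚ)) (k - j - i)))]
  have hinner : ∀ s ∈ range (k + 1),
      (∑ j ∈ range (s + 1), qbinom (-c) j * qbinom c (s - j) *
        (qbinom x (k - j - (s - j)) * qbinom (x + c + ((k - j - (s - j) : ℕ) : ℚ))
          (k - j - (s - j)))) =
      qbinom 0 s * (qbinom x (k - s) * qbinom (x + c + ((k - s : ℕ) : ℚ)) (k - s)) := by
    intro s hs
    rw [mem_range] at hs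
    have h1 : (∑ j ∈ range (s + 1), qbinom (-c) j * qbinom c (s - j) *
        (qbinom x (k - j - (s - j)) * qbinom (x + c + ((k - j - (s - j) : ℕ) : ℚ))
          (k - j - (s - j)))) =
        (∑ j ∈ range (s + 1), qbinom (-c) j * qbinom c (s - j)) *
          (qbinom x (k - s) * qbinom (x + c + ((k - s : ℕ) : ℚ)) (k - s)) := by
      rw [sum_mul]
      refine sum_congr rfl fun j hj => ?_
      rw [mem_range] at hj
      have e : k - j - (s - j) = k - s := by omega
      rw [e]
    rw [h1, ← qbinom_vandermonde (-c) c s, neg_add_cancel]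
  rw [sum_congr rfl hinner, Finset.sum_eq_single 0 (fun s _ hs => by
      rw [qbinom_zero, if_neg hs, zero_mul])
    (fun h => absurd (mem_range.mpr (by omega)) h)]
  rw [qbinom_zero, if_pos rfl, one_mul, Nat.sub_zero, pP, hx]
  congr 2
  push_cast [hc]
  ring
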